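/- For σ = s or σ = −s, the function f^{(p)}(σ;u) simplifies to f^{(p)}(±s; u) = e^{∓pu} ∏_{j=1}^{p} sinh((2s−j+1)λ), for all integers 0 ≤ p ≤ 2s and all u ∈ ℂ. -/

import Mathlib

open Finset Complex

/-- q-integer `[n] = sinh(nλ)/sinh(λ)` with `q = e^λ`. -/
noncomputable def sqint (lam : ℂ) (n : ℕ) : ℂ := Complex.sinh (n * lam) / Complex.sinh lam

/-- q-factorial. -/
noncomputable def sqfact (lam : ℂ) : ℕ → ℂ
  | 0 => 1
  | n + 1 => sqint lam (n + 1) * sqfact lam n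

/-- q-binomial coefficient `[m choose n]`, zero when `n > m`. -/
noncomputable def sqbinom (lam : ℂ) (m n : ℕ) : ℂ :=
  if n ≤ m then sqfact lam m / (sqfact lam (m - n) * sqfact lam n) else 0

/-- The function
`f^{(p)}(σ;u) = ∑_{k=0}^{p} (-e^{2λσ})^k [p choose k]_q
  ∏_{j=1}^{k} sinh(u+(j-1)λ) ∏_{j=k+1}^{p} sinh(u+(2s+j-p)λ)`,
where `s2 = 2s`. -/
noncomputable def ff (s2 : ℕ) (lam σ u : ℂ) (p : ℕ) : ℂ :=
  ∑ k ∈ range (p + 1),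
    (-Complex.exp (2 * lam * σ)) ^ k * sqbinom lam p k
      * (∏ j ∈ range k, Complex.sinh (u + (j : ℂ) * lam))
      * (∏ j ∈ Finset.Ico k p, Complex.sinh (u + ((s2 : ℂ) + (j : ℂ) + 1 - (p : ℂ)) * lam))

noncomputable def AA (lam u : ℂ) (k : ℕ) : ℂ := ∏ j ∈ range k, Complex.sinh (u + (j:ℂ)*lam)

noncomputable def BB (s2 : ℕ) (lam u : ℂ) (p k : ℕ) : ℂ :=
  ∏ j ∈ Finset.Ico k p, Complex.sinh (u + ((s2:ℂ)+(j:ℂ)+1-(p:ℂ))*lam)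

lemma ff_eq (s2 : ℕ) (lam σ u : ℂ) (p : ℕ) :
    ff s2 lam σ u p
      = ∑ k ∈ range (p+1),
          (-Complex.exp (2*lam*σ))^k * sqbinom lam p k * AA lam u k * BB s2 lam u p k := rfl

lemma sinh_expand (z : ℂ) : Complex.sinh z = (Complex.exp z - Complex.exp (-z)) / 2 := rfl

lemma brackE (ε : ℂ) (hε : ε = 1 ∨ ε = -1) (u lam a b : ℂ) :
    Complex.exp (ε*a*lam) * Complex.sinh (u + b*lam)
      - Complex.exp (ε*b*lam) * Complex.sinh (u + a*lam)
      = Complex.exp (-(ε*u)) * Complex.sinh ((b-a)*lam) := by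
  rcases hε with h | h <;> subst h <;>
  · simp only [sinh_expand, mul_sub, mul_div_assoc']
    simp only [← Complex.exp_add]
    ring_nf

lemma sinh_split (ε : ℂ) (hε : ε = 1 ∨ ε = -1) (A B : ℂ) :
    Complex.sinh (A + B) = Complex.exp (ε*B) * Complex.sinh A + Complex.exp (-(ε*A)) * Complex.sinh B := by
  rcases hε with h | h <;> subst h <;>
  · simp only [sinh_expand, mul_sub, mul_div_assoc']
    simp only [← Complex.exp_add]
    ring_nf

lemma sqfact_succ (lam : ℂ) (n : ℕ) : sqfact lam (n+1) = sqint lam (n+1) * sqfact lam n := rfl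

lemma sqfact_ne_zero (lam : ℂ) (hlam : Complex.sinh lam ≠ 0) (n : ℕ)
    (h : ∀ j : ℕ, 1 ≤ j → j ≤ n → Complex.sinh ((j:ℂ)*lam) ≠ 0) : sqfact lam n ≠ 0 := by
  induction n with
  | zero => simp [sqfact]
  | succ m ih =>
    rw [sqfact_succ]
    refine mul_ne_zero ?_ (ih fun j h1 h2 => h j h1 (by omega))
    exact div_ne_zero (h (m+1) (by omega) le_rfl) hlam

lemma pascal (lam : ℂ) (hlam : Complex.sinh lam ≠ 0) (ε : ℂ) (hε : ε = 1 ∨ ε = -1)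
    (p k : ℕ) (hk : k ≤ p) (hf : ∀ j : ℕ, 1 ≤ j → j ≤ p+1 → Complex.sinh ((j:ℂ)*lam) ≠ 0) :
    sqbinom lam (p+1) (k+1)
      = Complex.exp (ε*((k:ℂ)+1)*lam) * sqbinom lam p (k+1)
        + Complex.exp (-(ε*((p:ℂ)-(k:ℂ))*lam)) * sqbinom lam p k := by
  rcases eq_or_lt_of_le hk with rfl | hkp
  · have h1 : sqbinom lam (k+1) (k+1) = 1 := by
      rw [sqbinom, if_pos le_rfl]
      simp only [Nat.sub_self]
      rw [show sqfact lam 0 = 1 from rfl, one_mul,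
        div_self (sqfact_ne_zero lam hlam (k+1) hf)]
    have h2 : sqbinom lam k (k+1) = 0 := by rw [sqbinom, if_neg (by omega)]
    have h3 : sqbinom lam k k = 1 := by
      rw [sqbinom, if_pos le_rfl]
      simp only [Nat.sub_self]
      rw [show sqfact lam 0 = 1 from rfl, one_mul,
        div_self (sqfact_ne_zero lam hlam k (fun j a b => hf j a (by omega)))]
    rw [h1, h2, h3, sub_self]
    simp
  · have hsub1 : (p+1) - (k+1) = p - k := by omega
    have hsub2 : p - (k+1) = (p-k) - 1 := by omega
    have hd : p - k = ((p-k)-1) + 1 := by omega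
    have castpk : ((p-k : ℕ) : ℂ) = (p:ℂ) - (k:ℂ) := by
      push_cast [Nat.cast_sub hk]; ring
    have key := sinh_split ε hε (((p:ℂ)-(k:ℂ))*lam) (((k:ℂ)+1)*lam)
    rw [show ((p:ℂ)-(k:ℂ))*lam + ((k:ℂ)+1)*lam = ((p:ℂ)+1)*lam by ring] at key
    have Fp := sqfact_ne_zero lam hlam p (fun j a b => hf j a (by omega))
    have Fk := sqfact_ne_zero lam hlam k (fun j a b => hf j a (by omega))
    have Fpk1 := sqfact_ne_zero lam hlam ((p-k)-1) (fun j a b => hf j a (by omega))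
    have S2 : Complex.sinh (((p:ℂ)-(k:ℂ))*lam) ≠ 0 := by
      have := hf (p-k) (by omega) (by omega); rwa [castpk] at this
    have S3 : Complex.sinh (((k:ℂ)+1)*lam) ≠ 0 := by
      have := hf (k+1) (by omega) (by omega); push_cast at this ⊢; exact this
    rw [sqbinom, sqbinom, sqbinom, if_pos (by omega), if_pos (by omega), if_pos (by omega),
      hsub1, hsub2, sqfact_succ, sqfact_succ]
    rw [hd, sqfact_succ, ← hd]
    have e1 : sqint lam (p+1) = Complex.sinh (((p:ℂ)+1)*lam) / Complex.sinh lam := by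
      rw [sqint]; push_cast; ring_nf
    have e2 : sqint lam (p-k) = Complex.sinh (((p:ℂ)-(k:ℂ))*lam) / Complex.sinh lam := by
      rw [sqint, castpk]
    have e3 : sqint lam (k+1) = Complex.sinh (((k:ℂ)+1)*lam) / Complex.sinh lam := by
      rw [sqint]; push_cast; ring_nf
    rw [e1, e2, e3, key]
    generalize Complex.sinh (((p:ℂ)-(k:ℂ))*lam) = a at S2 ⊢
    generalize Complex.sinh (((k:ℂ)+1)*lam) = b at S3 ⊢
    field_simp

lemma BB_shift (s2 : ℕ) (lam u : ℂ) (p k : ℕ) (hk : k ≤ p) :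
    BB s2 lam u (p+1) (k+1) = BB s2 lam u p k := by
  rw [BB, BB, Finset.prod_Ico_eq_prod_range, Finset.prod_Ico_eq_prod_range]
  rw [show p + 1 - (k+1) = p - k by omega]
  refine Finset.prod_congr rfl fun i hi => ?_
  congr 1
  push_cast
  ring

lemma BB_bot (s2 : ℕ) (lam u : ℂ) (p k : ℕ) (hk : k ≤ p) :
    BB s2 lam u (p+1) k
      = Complex.sinh (u + ((s2:ℂ)+(k:ℂ)-(p:ℂ))*lam) * BB s2 lam u p k := by
  rw [BB, BB, Finset.prod_Ico_eq_prod_range, Finset.prod_Ico_eq_prod_range]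
  rw [show p + 1 - k = (p - k) + 1 by omega, Finset.prod_range_succ']
  rw [mul_comm]
  congr 1
  · congr 1
    push_cast
    ring
  · refine Finset.prod_congr rfl fun i hi => ?_
    congr 1
    push_cast
    ring

lemma AA_succ (lam u : ℂ) (k : ℕ) :
    AA lam u (k+1) = AA lam u k * Complex.sinh (u + (k:ℂ)*lam) := Finset.prod_range_succ _ _

lemma sqbinom_zero_right (lam : ℂ) (hlam : Complex.sinh lam ≠ 0) (p : ℕ)
    (hf : ∀ j : ℕ, 1 ≤ j → j ≤ p → Complex.sinh ((j:ℂ)*lam) ≠ 0) :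
    sqbinom lam p 0 = 1 := by
  rw [sqbinom, if_pos (by omega)]
  simp only [Nat.sub_zero]
  rw [show sqfact lam 0 = 1 from rfl, mul_one, div_self (sqfact_ne_zero lam hlam p hf)]

lemma sum_shift_aux {M : Type*} [AddCommMonoid M] (n : ℕ) (f : ℕ → M) (h : f (n+1) = 0) :
    (∑ k ∈ range (n+1), f (k+1)) + f 0 = ∑ k ∈ range (n+1), f k := by
  rw [← Finset.sum_range_succ' f (n+1), Finset.sum_range_succ, h, add_zero]

lemma main (s2 : ℕ) (lam u ε : ℂ) (hlam : Complex.sinh lam ≠ 0) (hε : ε = 1 ∨ ε = -1) :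
    ∀ p : ℕ, (∀ j : ℕ, 1 ≤ j → j ≤ p → Complex.sinh ((j:ℂ)*lam) ≠ 0) →
      ff s2 lam (ε * (s2:ℂ) / 2) u p
        = Complex.exp (-ε * (p:ℂ) * u) * ∏ j ∈ range p, Complex.sinh (((s2:ℂ) - (j:ℂ)) * lam) := by
  have hw : -Complex.exp (2*lam*(ε*(s2:ℂ)/2)) = -Complex.exp (ε*(s2:ℂ)*lam) := by
    congr 1; ring
  intro p
  induction p with
  | zero =>
    intro _
    simp [ff_eq, AA, BB, sqbinom, sqfact]
  | succ p ih =>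
    intro hf
    have hfp : ∀ j : ℕ, 1 ≤ j → j ≤ p → Complex.sinh ((j:ℂ)*lam) ≠ 0 :=
      fun j a b => hf j a (by omega)
    set W : ℂ := Complex.exp (ε*(s2:ℂ)*lam) with hWdef
    have hff : ff s2 lam (ε * (s2:ℂ) / 2) u (p+1)
        = ∑ k ∈ range (p+1+1), (-W)^k * sqbinom lam (p+1) k * AA lam u k * BB s2 lam u (p+1) k := by
      rw [ff_eq]
      refine Finset.sum_congr rfl fun k _ => ?_
      rw [hw]
    rw [hff, Finset.sum_range_succ']
    -- T 0 = TT 0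
    have hT0 : (-W)^0 * sqbinom lam (p+1) 0 * AA lam u 0 * BB s2 lam u (p+1) 0
        = (-W)^0 * Complex.exp (ε*((0:ℕ):ℂ)*lam) * sqbinom lam p 0 * AA lam u 0 * BB s2 lam u (p+1) 0 := by
      rw [sqbinom_zero_right lam hlam (p+1) hf, sqbinom_zero_right lam hlam p hfp]
      norm_num
    -- pascal split
    have hsplit : ∀ k ∈ range (p+1),
        (-W)^(k+1) * sqbinom lam (p+1) (k+1) * AA lam u (k+1) * BB s2 lam u (p+1) (k+1)
          = ((-W)^(k+1) * Complex.exp (ε*((k:ℂ)+1)*lam) * sqbinom lam p (k+1) * AA lam u (k+1) * BB s2 lam u (p+1) (k+1))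
            + ((-W)^(k+1) * Complex.exp (-(ε*((p:ℂ)-(k:ℂ))*lam)) * sqbinom lam p k * AA lam u (k+1) * BB s2 lam u (p+1) (k+1)) := by
      intro k hk
      rw [pascal lam hlam ε hε p k (by simpa using Nat.lt_succ_iff.mp (mem_range.mp hk)) hf]
      ring
    rw [Finset.sum_congr rfl hsplit, Finset.sum_add_distrib, hT0]
    -- reassemble first sum
    have hG : ∀ k ∈ range (p+1),
        (-W)^(k+1) * Complex.exp (ε*((k:ℂ)+1)*lam) * sqbinom lam p (k+1) * AA lam u (k+1) * BB s2 lam u (p+1) (k+1)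
          = (-W)^(k+1) * Complex.exp (ε*(((k+1:ℕ)):ℂ)*lam) * sqbinom lam p (k+1) * AA lam u (k+1) * BB s2 lam u (p+1) (k+1) := by
      intro k _
      norm_num
    rw [Finset.sum_congr rfl hG]
    have hC2 : (∑ k ∈ range (p+1),
          (-W)^(k+1) * Complex.exp (ε*(((k+1:ℕ)):ℂ)*lam) * sqbinom lam p (k+1) * AA lam u (k+1) * BB s2 lam u (p+1) (k+1))
        + (-W)^0 * Complex.exp (ε*((0:ℕ):ℂ)*lam) * sqbinom lam p 0 * AA lam u 0 * BB s2 lam u (p+1) 0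
        = ∑ k ∈ range (p+1), (-W)^k * Complex.exp (ε*((k:ℕ):ℂ)*lam) * sqbinom lam p k * AA lam u k * BB s2 lam u (p+1) k := by
      have hz : sqbinom lam p (p+1) = 0 := by rw [sqbinom, if_neg (by omega)]
      exact sum_shift_aux p
        (fun k => (-W)^k * Complex.exp (ε*((k:ℕ):ℂ)*lam) * sqbinom lam p k * AA lam u k * BB s2 lam u (p+1) k)
        (by simp [hz])
    rw [add_right_comm]
    rw [hC2, ← Finset.sum_add_distrib]
    have hper : ∀ k ∈ range (p+1),
        (-W)^k * Complex.exp (ε*((k:ℕ):ℂ)*lam) * sqbinom lam p k * AA lam u k * BB s2 lam u (p+1) k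
          + (-W)^(k+1) * Complex.exp (-(ε*((p:ℂ)-(k:ℂ))*lam)) * sqbinom lam p k * AA lam u (k+1) * BB s2 lam u (p+1) (k+1)
        = (Complex.exp (-(ε*u)) * Complex.sinh (((s2:ℂ)-(p:ℂ))*lam))
            * ((-W)^k * sqbinom lam p k * AA lam u k * BB s2 lam u p k) := by
      intro k hk
      have hkp : k ≤ p := Nat.lt_succ_iff.mp (mem_range.mp hk)
      rw [BB_bot s2 lam u p k hkp, BB_shift s2 lam u p k hkp, AA_succ]
      have hWE : W * Complex.exp (-(ε*((p:ℂ)-(k:ℂ))*lam))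
          = Complex.exp (ε*((s2:ℂ)+(k:ℂ)-(p:ℂ))*lam) := by
        rw [hWdef, ← Complex.exp_add]; congr 1; ring
      have hbr := brackE ε hε u lam (k:ℂ) ((s2:ℂ)+(k:ℂ)-(p:ℂ))
      rw [show (s2:ℂ)+(k:ℂ)-(p:ℂ) - (k:ℂ) = (s2:ℂ)-(p:ℂ) by ring] at hbr
      linear_combination ((-W)^k * sqbinom lam p k * AA lam u k * BB s2 lam u p k) * hbr
        - ((-W)^k * sqbinom lam p k * AA lam u k * BB s2 lam u p k * Complex.sinh (u + (k:ℂ)*lam)) * hWE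
    rw [Finset.sum_congr rfl hper, ← Finset.mul_sum]
    have hffp : (∑ k ∈ range (p+1), (-W)^k * sqbinom lam p k * AA lam u k * BB s2 lam u p k)
        = ff s2 lam (ε * (s2:ℂ) / 2) u p := by
      rw [ff_eq]
      exact Finset.sum_congr rfl fun k _ => by rw [hw]
    rw [hffp, ih hfp, Finset.prod_range_succ]
    have hexp : Complex.exp (-(ε*u)) * Complex.exp (-ε*(p:ℂ)*u)
        = Complex.exp (-ε*(((p:ℕ):ℂ)+1)*u) := by
      rw [← Complex.exp_add]; congr 1; ring
    push_cast
    linear_combination ((∏ j ∈ range p, Complex.sinh (((s2:ℂ)-(j:ℂ))*lam))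
      * Complex.sinh (((s2:ℂ)-(p:ℂ))*lam)) * hexp

lemma sinh_nat_mul_eq_zero (z : ℂ) (h : Complex.sinh z = 0) (t : ℕ) : Complex.sinh ((t:ℂ)*z) = 0 := by
  have h1 : Complex.exp (2*z) = 1 := by
    rw [sinh_expand] at h
    have h2 : Complex.exp z = Complex.exp (-z) := by
      field_simp at h; linear_combination h
    calc Complex.exp (2*z) = Complex.exp z * Complex.exp z := by
          rw [← Complex.exp_add]; ring_nf
      _ = Complex.exp (-z) * Complex.exp z := by rw [h2]
      _ = 1 := by rw [← Complex.exp_add]; simp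
  have h3 : Complex.exp ((t:ℂ)*z) * Complex.exp ((t:ℂ)*z) = 1 := by
    rw [← Complex.exp_add, show (t:ℂ)*z + (t:ℂ)*z = (t:ℕ) * (2*z) by push_cast; ring,
      Complex.exp_nat_mul, h1, one_pow]
  have h4 : Complex.exp ((t:ℂ)*z) = Complex.exp (-((t:ℂ)*z)) := by
    rw [Complex.exp_neg]
    exact eq_inv_of_mul_eq_one_left h3
  rw [sinh_expand, h4]; ring

lemma sqfact_eq_zero (lam : ℂ) (m n : ℕ) (h1 : 1 ≤ m) (h2 : m ≤ n)
    (h : Complex.sinh ((m:ℂ)*lam) = 0) : sqfact lam n = 0 := by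
  induction n with
  | zero => omega
  | succ q ih =>
    rw [sqfact_succ]
    rcases Nat.lt_or_ge m (q+1) with hlt | hge
    · rw [ih (by omega), mul_zero]
    · have : m = q + 1 := by omega
      subst this
      rw [sqint, h, zero_div, zero_mul]

/-- For `σ = ±s`, the function simplifies:
`f^{(p)}(±s;u) = e^{∓pu} ∏_{j=1}^{p} sinh((2s−j+1)λ)` for `0 ≤ p ≤ 2s`. -/
theorem f_simplification (s2 : ℕ) (hs2 : 1 ≤ s2) (lam : ℂ) (hlam : Complex.sinh lam ≠ 0)
    (ε : ℂ) (hε : ε = 1 ∨ ε = -1) (u : ℂ) (p : ℕ) (hp : p ≤ s2) :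
    ff s2 lam (ε * (s2 : ℂ) / 2) u p
      = Complex.exp (-ε * (p : ℂ) * u)
          * ∏ j ∈ range p, Complex.sinh (((s2 : ℂ) - (j : ℂ)) * lam) := by
  by_cases hdeg : ∀ j : ℕ, 1 ≤ j → j ≤ p → Complex.sinh ((j:ℂ)*lam) ≠ 0
  · exact main s2 lam u ε hlam hε p hdeg
  · push_neg at hdeg
    obtain ⟨m, hm1, hm2, hm0⟩ := hdeg
    have hL : ff s2 lam (ε * (s2 : ℂ) / 2) u p = 0 := by
      rw [ff_eq]
      refine Finset.sum_eq_zero fun k _ => ?_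
      have : sqbinom lam p k = 0 := by
        rw [sqbinom]
        split_ifs with h
        · rw [sqfact_eq_zero lam m p hm1 hm2 hm0, zero_div]
        · rfl
      rw [this]; ring
    rw [hL]
    have hj0 : s2 % m < p := lt_of_lt_of_le (Nat.mod_lt _ (by omega)) hm2
    have hsub : s2 - s2 % m = m * (s2 / m) := by
      have := Nat.div_add_mod s2 m; omega
    have hz : Complex.sinh (((s2:ℂ) - ((s2 % m : ℕ):ℂ)) * lam) = 0 := by
      have hcast : ((s2:ℂ) - ((s2 % m : ℕ):ℂ)) * lam = ((s2 / m : ℕ):ℂ) * ((m:ℂ) * lam) := by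
        have h1 : ((s2 - s2 % m : ℕ):ℂ) = (s2:ℂ) - ((s2 % m : ℕ):ℂ) := by
          push_cast [Nat.cast_sub (Nat.mod_le s2 m)]; ring
        rw [← h1, hsub]; push_cast; ring
      rw [hcast]
      exact sinh_nat_mul_eq_zero _ hm0 _
    rw [Finset.prod_eq_zero (Finset.mem_range.mpr hj0) hz, mul_zero]
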